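/- Let T be a 3-regular tree with vertex set V and edge set E, and let (η_e)_{e ∈ E} be an i.i.d. family of {0,1}-valued random variables with P(η_e = 1) = 1/2. For each vertex v define X̂(v) := 0 if the three edges incident to v all carry equal label, and X̂(v) := 1 otherwise; define Y(v) := max{η_e : e incident to v}. Then X̂(v) ≤ Y(v) for every vertex v, and (X̂(v))_{v ∈ V} is an i.i.d. family with P(X̂(v) = 1) = 3/4 for every v. In particular, for any finite set of distinct vertices v_1, …, v_k, w_1, …, w_l, one has P(X̂(v_1) = 1, …, X̂(v_k) = 1, X̂(w_1) = 0, …, X̂(w_l) = 0) = (3/4)^k (1/4)^l. -/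

import Mathlib

open MeasureTheory ProbabilityTheory
open scoped ENNReal

theorem peres_coupling_iid {V : Type*} (T : SimpleGraph V) (hT : T.IsTree)
    [∀ v, Fintype (T.neighborSet v)] (hreg : ∀ v, T.degree v = 3)
    {Ω : Type*} [MeasurableSpace Ω] (P : Measure Ω) [IsProbabilityMeasure P]
    (η : T.edgeSet → Ω → Bool)
    (hmeas : ∀ e, Measurable (η e))
    (hindep : iIndepFun η P)
    (hhalf : ∀ e, P {ω | η e ω = true} = 1 / 2)
    (Xhat Y : V → Ω → Bool)
    (hXhat : ∀ v ω, Xhat v ω = true ↔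
      ∃ e f : T.edgeSet, v ∈ (e : Sym2 V) ∧ v ∈ (f : Sym2 V) ∧ η e ω ≠ η f ω)
    (hY : ∀ v ω, Y v ω = true ↔ ∃ e : T.edgeSet, v ∈ (e : Sym2 V) ∧ η e ω = true) :
    (∀ v ω, Xhat v ω ≤ Y v ω) ∧
    iIndepFun Xhat P ∧
    (∀ v, P {ω | Xhat v ω = true} = 3 / 4) ∧
    ∀ (k l : ℕ) (vs : Fin k → V) (ws : Fin l → V),
      Function.Injective (Sum.elim vs ws) →
      P {ω | (∀ i, Xhat (vs i) ω = true) ∧ ∀ j, Xhat (ws j) ω = false} =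
        (3 / 4 : ℝ≥0∞) ^ k * (1 / 4 : ℝ≥0∞) ^ l := by
  classical
  have harith1 : (1:ℝ≥0∞) - 1/2 = 1/2 := by
    refine ENNReal.sub_eq_of_eq_add (by norm_num) ?_
    rw [ENNReal.div_add_div_same]
    norm_num
    exact (ENNReal.div_self (by norm_num) (by norm_num)).symm
  have harith2 : (1/2:ℝ≥0∞) * (1/2) = 1/4 := by
    rw [one_div, one_div, ← ENNReal.mul_inv (by norm_num) (by norm_num)]
    norm_num
  have harith3 : (3/4:ℝ≥0∞) + 1/4 = 1 := by
    rw [ENNReal.div_add_div_same]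
    norm_num
    exact ENNReal.div_self (by norm_num) (by norm_num)
  -- incidence finsets in the edge subtype
  set inc : V → Finset T.edgeSet := fun v => (T.incidenceFinset v).subtype (· ∈ T.edgeSet)
    with hinc_def
  have mem_inc : ∀ (v : V) (e : T.edgeSet), e ∈ inc v ↔ v ∈ (e : Sym2 V) := by
    rintro v ⟨e, he⟩
    simp [hinc_def, Finset.mem_subtype, SimpleGraph.mem_incidenceFinset,
      SimpleGraph.incidenceSet, he]
  have card_inc : ∀ v, (inc v).card = 3 := by
    intro v
    rw [hinc_def]
    simp only
    rw [Finset.card_subtype, Finset.filter_true_of_mem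
      (fun e he => ((T.mem_incidenceFinset v e).mp he).1),
      SimpleGraph.card_incidenceFinset_eq_degree, hreg]
  -- measurability of fibers of η
  have hfib_meas : ∀ (e : T.edgeSet) (c : Bool), MeasurableSet {ω | η e ω = c} := by
    intro e c
    exact hmeas e (measurableSet_singleton c)
  have hfiber : ∀ (e : T.edgeSet) (c : Bool), P {ω | η e ω = c} = 1 / 2 := by
    intro e c
    cases c
    · have hcompl : {ω | η e ω = false} = {ω | η e ω = true}ᶜ := by
        ext ω; simp
      rw [hcompl, prob_compl_eq_one_sub (hfib_meas e true), hhalf, harith1]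
    · exact hhalf e
  -- measurability of Xhat fibers
  have hXm : ∀ v (c : Bool), MeasurableSet {ω | Xhat v ω = c} := by
    have htrue : ∀ v, MeasurableSet {ω | Xhat v ω = true} := by
      intro v
      have hset : {ω | Xhat v ω = true} =
          ⋃ e ∈ inc v, ⋃ f ∈ inc v, (({ω | η e ω = true} ∩ {ω | η f ω = false}) ∪
            ({ω | η e ω = false} ∩ {ω | η f ω = true})) := by
        ext ω
        simp only [Set.mem_setOf_eq, hXhat, Set.mem_iUnion, Set.mem_union, Set.mem_inter_iff,
          Set.mem_setOf_eq]
        constructor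
        · rintro ⟨e, f, he, hf, hne⟩
          refine ⟨e, (mem_inc v e).mpr he, f, (mem_inc v f).mpr hf, ?_⟩
          cases he' : η e ω <;> cases hf' : η f ω <;> simp_all
        · rintro ⟨e, he, f, hf, h⟩
          refine ⟨e, f, (mem_inc v e).mp he, (mem_inc v f).mp hf, ?_⟩
          rcases h with ⟨h1, h2⟩ | ⟨h1, h2⟩ <;> simp [h1, h2]
      rw [hset]
      refine Finset.measurableSet_biUnion _ fun e _ => ?_
      refine Finset.measurableSet_biUnion _ fun f _ => ?_
      exact ((hfib_meas e true).inter (hfib_meas f false)).union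
        ((hfib_meas e false).inter (hfib_meas f true))
    intro v c
    cases c
    · have : {ω | Xhat v ω = false} = {ω | Xhat v ω = true}ᶜ := by
        ext ω; simp
      rw [this]; exact (htrue v).compl
    · exact htrue v
  -- all subsets of finite pi types over Bool are measurable
  have allmeas : ∀ (s : Finset T.edgeSet) (M : Set ((e : s) → Bool)), MeasurableSet M :=
    fun s M => M.to_countable.measurableSet
  -- determined events are preimages
  have pre_eq : ∀ (s : Finset T.edgeSet) (A : Set Ω),
      (∀ ω ω', (∀ e ∈ s, η e ω = η e ω') → ω ∈ A → ω' ∈ A) →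
      A = (fun ω (e : s) => η e ω) ⁻¹' ((fun ω (e : s) => η e ω) '' A) := by
    intro s A hdet
    apply Set.Subset.antisymm (Set.subset_preimage_image _ _)
    rintro ω' ⟨ω, hωA, hfe⟩
    exact hdet ω ω' (fun e he => congrFun hfe ⟨e, he⟩) hωA
  -- grouped independence
  have grouped : ∀ (s t : Finset T.edgeSet), Disjoint s t → ∀ (A B : Set Ω),
      (∀ ω ω', (∀ e ∈ s, η e ω = η e ω') → ω ∈ A → ω' ∈ A) →
      (∀ ω ω', (∀ e ∈ t, η e ω = η e ω') → ω ∈ B → ω' ∈ B) →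
      P (A ∩ B) = P A * P B := by
    intro s t hst A B hA hB
    have hind := hindep.indepFun_finset s t hst hmeas
    have hAeq := pre_eq s A hA
    have hBeq := pre_eq t B hB
    calc P (A ∩ B) = P ((fun ω (e : s) => η e ω) ⁻¹' ((fun ω (e : s) => η e ω) '' A) ∩
        (fun ω (e : t) => η e ω) ⁻¹' ((fun ω (e : t) => η e ω) '' B)) := by
          rw [← hAeq, ← hBeq]
      _ = P ((fun ω (e : s) => η e ω) ⁻¹' ((fun ω (e : s) => η e ω) '' A)) *
          P ((fun ω (e : t) => η e ω) ⁻¹' ((fun ω (e : t) => η e ω) '' B)) :=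
          hind.measure_inter_preimage_eq_mul _ _ (allmeas _ _) (allmeas _ _)
      _ = P A * P B := by rw [← hAeq, ← hBeq]
  -- leaf lemma
  have leaf : ∀ (S : Finset V), S.Nonempty →
      ∃ v ∈ S, ∀ u1 ∈ S, ∀ u2 ∈ S, T.Adj v u1 → T.Adj v u2 → u1 = u2 := by
    intro S hne
    obtain ⟨r, hr⟩ := hne
    obtain ⟨v, hvS, hmax⟩ := S.exists_max_image (fun u => T.dist r u) ⟨r, hr⟩
    refine ⟨v, hvS, ?_⟩
    have getpath : ∀ u ∈ S, T.Adj v u →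
        ∃ p : T.Walk r u, p.IsPath ∧ v ∉ p.support := by
      intro u hu hadj
      obtain ⟨w, hw⟩ := (hT.isConnected.preconnected r u).exists_walk_length_eq_dist
      refine ⟨w.bypass, w.bypass_isPath, ?_⟩
      intro hvsup
      have hlb : w.bypass.length ≤ T.dist r u := hw ▸ w.length_bypass_le
      have hdu : T.dist r u ≤ T.dist r v := hmax u hu
      have h1 : T.dist r v ≤ (w.bypass.takeUntil v hvsup).length :=
        SimpleGraph.dist_le _
      have h2 : (w.bypass.takeUntil v hvsup).length +
          (w.bypass.dropUntil v hvsup).length = w.bypass.length := by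
        rw [← SimpleGraph.Walk.length_append, SimpleGraph.Walk.take_spec]
      have h3 : (w.bypass.dropUntil v hvsup).length ≠ 0 := by
        intro h0
        exact hadj.ne (SimpleGraph.Walk.eq_of_length_eq_zero h0)
      omega
    intro u1 h1 u2 h2 ha1 ha2
    obtain ⟨p1, hp1, hv1⟩ := getpath u1 h1 ha1
    obtain ⟨p2, hp2, hv2⟩ := getpath u2 h2 ha2
    have hpc1 : (p1.concat ha1.symm).IsPath := by
      rw [← SimpleGraph.Walk.isPath_reverse_iff, SimpleGraph.Walk.reverse_concat]
      exact SimpleGraph.Walk.IsPath.cons hp1.reverse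
        (by simpa [SimpleGraph.Walk.support_reverse] using hv1)
    have hpc2 : (p2.concat ha2.symm).IsPath := by
      rw [← SimpleGraph.Walk.isPath_reverse_iff, SimpleGraph.Walk.reverse_concat]
      exact SimpleGraph.Walk.IsPath.cons hp2.reverse
        (by simpa [SimpleGraph.Walk.support_reverse] using hv2)
    have heq : p1.concat ha1.symm = p2.concat ha2.symm :=
      congrArg Subtype.val
        (hT.IsAcyclic.path_unique ⟨p1.concat ha1.symm, hpc1⟩ ⟨p2.concat ha2.symm, hpc2⟩)
    obtain ⟨huv, -⟩ := SimpleGraph.Walk.concat_inj heq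
    exact huv
  -- dependence of Xhat on incident edges
  have hXdep : ∀ u (ω ω' : Ω), (∀ e ∈ inc u, η e ω = η e ω') → Xhat u ω = Xhat u ω' := by
    intro u ω ω' h
    rw [Bool.eq_iff_iff, hXhat, hXhat]
    constructor
    · rintro ⟨e, f, he, hf, hne⟩
      exact ⟨e, f, he, hf, by
        rw [← h e ((mem_inc u e).mpr he), ← h f ((mem_inc u f).mpr hf)]; exact hne⟩
    · rintro ⟨e, f, he, hf, hne⟩
      exact ⟨e, f, he, hf, by
        rw [h e ((mem_inc u e).mpr he), h f ((mem_inc u f).mpr hf)]; exact hne⟩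
  -- MASTER LEMMA
  have master : ∀ (S : Finset V) (b : V → Bool),
      P {ω | ∀ v ∈ S, Xhat v ω = b v} =
        ∏ v ∈ S, (if b v then (3/4 : ℝ≥0∞) else 1/4) := by
    intro S
    induction S using Finset.strongInduction with
    | _ S ih =>
      intro b
      rcases S.eq_empty_or_nonempty with rfl | hne
      · simp
      obtain ⟨v, hvS, hv1⟩ := leaf S hne
      set S' := S.erase v with hS'
      set A := {ω | ∀ u ∈ S', Xhat u ω = b u} with hA
      have hAmeas : MeasurableSet A := by
        have hAi : A = ⋂ u ∈ (S' : Set V), {ω | Xhat u ω = b u} := by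
          ext ω; simp [hA]
        rw [hAi]
        exact MeasurableSet.biInter S'.countable_toSet fun u _ => hXm u (b u)
      have hPA : P A = ∏ u ∈ S', (if b u then (3/4 : ℝ≥0∞) else 1/4) :=
        ih S' (Finset.erase_ssubset hvS) b
      set t' := S'.biUnion inc with ht'
      -- shared edge uniqueness
      have shared_unique : ∀ e ∈ inc v, e ∈ t' → ∀ f ∈ inc v, f ∈ t' → e = f := by
        intro e he het f hf hft
        obtain ⟨u1, hu1, hu1e⟩ := Finset.mem_biUnion.mp het
        obtain ⟨u2, hu2, hu2f⟩ := Finset.mem_biUnion.mp hft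
        have hvu1 : v ≠ u1 := fun h => (Finset.ne_of_mem_erase hu1) h.symm
        have hvu2 : v ≠ u2 := fun h => (Finset.ne_of_mem_erase hu2) h.symm
        have he' : (e : Sym2 V) = s(v, u1) :=
          (Sym2.mem_and_mem_iff hvu1).mp ⟨(mem_inc v e).mp he, (mem_inc u1 e).mp hu1e⟩
        have hf' : (f : Sym2 V) = s(v, u2) :=
          (Sym2.mem_and_mem_iff hvu2).mp ⟨(mem_inc v f).mp hf, (mem_inc u2 f).mp hu2f⟩
        have hadj1 : T.Adj v u1 := T.mem_edgeSet.mp (he' ▸ e.2)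
        have hadj2 : T.Adj v u2 := T.mem_edgeSet.mp (hf' ▸ f.2)
        have hu12 : u1 = u2 := hv1 u1 (Finset.mem_of_mem_erase hu1) u2
          (Finset.mem_of_mem_erase hu2) hadj1 hadj2
        exact Subtype.ext (by rw [he', hf', hu12])
      -- pick e1 e2 e3
      set bad := (inc v).filter (· ∈ t') with hbad_def
      have hbad1 : bad.card ≤ 1 := by
        refine Finset.card_le_one.mpr fun a ha b' hb' => ?_
        rw [hbad_def, Finset.mem_filter] at ha hb'
        exact shared_unique a ha.1 ha.2 b' hb'.1 hb'.2
      have hbadsub : bad ⊆ inc v := Finset.filter_subset _ _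
      have hgood2 : 1 < ((inc v) \ bad).card := by
        rw [Finset.card_sdiff_of_subset hbadsub, card_inc]
        omega
      obtain ⟨e2, he2g, e3, he3g, he23⟩ := Finset.one_lt_card.mp hgood2
      have he2v : e2 ∈ inc v := (Finset.mem_sdiff.mp he2g).1
      have he3v : e3 ∈ inc v := (Finset.mem_sdiff.mp he3g).1
      have he2t' : e2 ∉ t' := fun h => (Finset.mem_sdiff.mp he2g).2
        (Finset.mem_filter.mpr ⟨he2v, h⟩)
      have he3t' : e3 ∉ t' := fun h => (Finset.mem_sdiff.mp he3g).2
        (Finset.mem_filter.mpr ⟨he3v, h⟩)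
      have h23sub : ({e2, e3} : Finset T.edgeSet) ⊆ inc v := by
        intro x hx
        rcases Finset.mem_insert.mp hx with rfl | hx
        · exact he2v
        · rw [Finset.mem_singleton.mp hx]; exact he3v
      have hrest : ((inc v) \ {e2, e3}).card = 1 := by
        rw [Finset.card_sdiff_of_subset h23sub, card_inc, Finset.card_pair he23]
      obtain ⟨e1, he1⟩ := Finset.card_eq_one.mp hrest
      have he1mem : e1 ∈ (inc v) \ ({e2, e3} : Finset T.edgeSet) := by
        rw [he1]; exact Finset.mem_singleton_self e1
      have he1v : e1 ∈ inc v := (Finset.mem_sdiff.mp he1mem).1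
      have he12 : e1 ≠ e2 := fun h =>
        (Finset.mem_sdiff.mp he1mem).2 (by rw [h]; simp)
      have he13 : e1 ≠ e3 := fun h =>
        (Finset.mem_sdiff.mp he1mem).2 (by rw [h]; simp)
      have hinc_v : inc v = {e1, e2, e3} := by
        have hu := Finset.sdiff_union_of_subset h23sub
        rw [he1] at hu
        rw [← hu]
        ext x
        simp only [Finset.mem_union, Finset.mem_singleton, Finset.mem_insert]
      -- dependence facts
      have hAdep : ∀ ω ω', (∀ e ∈ t', η e ω = η e ω') → ω ∈ A → ω' ∈ A := by
        intro ω ω' h hω u hu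
        rw [← hXdep u ω ω' fun e he => h e (Finset.mem_biUnion.mpr ⟨u, hu, he⟩)]
        exact hω u hu
      have hAcdep : ∀ (c : Bool) ω ω', (∀ e ∈ insert e1 t', η e ω = η e ω') →
          ω ∈ A ∩ {ω | η e1 ω = c} → ω' ∈ A ∩ {ω | η e1 ω = c} := by
        intro c ω ω' h hω
        refine ⟨hAdep ω ω' (fun e he => h e (Finset.mem_insert_of_mem he)) hω.1, ?_⟩
        have h1 := h e1 (Finset.mem_insert_self _ _)
        have h2 : η e1 ω = c := hω.2
        simp only [Set.mem_setOf_eq, ← h1]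
        exact h2
      have hDdep : ∀ (c : Bool) ω ω', (∀ e ∈ ({e2, e3} : Finset T.edgeSet), η e ω = η e ω') →
          ω ∈ {ω | η e2 ω = c} ∩ {ω | η e3 ω = c} →
          ω' ∈ {ω | η e2 ω = c} ∩ {ω | η e3 ω = c} := by
        intro c ω ω' h hω
        have h2 := h e2 (by simp)
        have h3 := h e3 (by simp)
        exact ⟨by simp only [Set.mem_setOf_eq, ← h2]; exact hω.1,
          by simp only [Set.mem_setOf_eq, ← h3]; exact hω.2⟩
      have hdisj : Disjoint (insert e1 t') ({e2, e3} : Finset T.edgeSet) := by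
        rw [Finset.disjoint_right]
        intro x hx
        rcases Finset.mem_insert.mp hx with rfl | hx
        · intro hmem
          rcases Finset.mem_insert.mp hmem with h | h
          · exact he12 h.symm
          · exact he2t' h
        · rw [Finset.mem_singleton.mp hx]
          intro hmem
          rcases Finset.mem_insert.mp hmem with h | h
          · exact he13 h.symm
          · exact he3t' h
      have hPD : ∀ c, P ({ω | η e2 ω = c} ∩ {ω | η e3 ω = c}) = 1/4 := by
        intro c
        rw [grouped {e2} {e3} (Finset.disjoint_singleton.mpr he23) _ _
          (fun ω ω' h hω => by
            simp only [Set.mem_setOf_eq, ← h e2 (Finset.mem_singleton_self e2)]; exact hω)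
          (fun ω ω' h hω => by
            simp only [Set.mem_setOf_eq, ← h e3 (Finset.mem_singleton_self e3)]; exact hω),
          hfiber, hfiber, harith2]
      have hPAc : ∀ c, P ((A ∩ {ω | η e1 ω = c}) ∩ ({ω | η e2 ω = c} ∩ {ω | η e3 ω = c}))
          = P (A ∩ {ω | η e1 ω = c}) * (1/4) := by
        intro c
        rw [grouped _ _ hdisj _ _ (hAcdep c) (hDdep c), hPD c]
      -- characterize Xhat v = false
      have hXvf : ∀ ω, Xhat v ω = false ↔ η e2 ω = η e1 ω ∧ η e3 ω = η e1 ω := by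
        intro ω
        rw [← Bool.not_eq_true, hXhat]
        push_neg
        constructor
        · intro h
          exact ⟨h e2 e1 ((mem_inc v e2).mp he2v) ((mem_inc v e1).mp he1v),
            h e3 e1 ((mem_inc v e3).mp he3v) ((mem_inc v e1).mp he1v)⟩
        · rintro ⟨h2, h3⟩ e f he hf
          have hval : ∀ g ∈ inc v, η g ω = η e1 ω := by
            intro g hg
            rw [hinc_v] at hg
            rcases Finset.mem_insert.mp hg with rfl | hg
            · rfl
            rcases Finset.mem_insert.mp hg with rfl | hg
            · exact h2
            · rw [Finset.mem_singleton.mp hg]; exact h3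
          rw [hval e ((mem_inc v e).mpr he), hval f ((mem_inc v f).mpr hf)]
      -- split the false event
      have hsplitF : A ∩ {ω | Xhat v ω = false} =
          ((A ∩ {ω | η e1 ω = true}) ∩ ({ω | η e2 ω = true} ∩ {ω | η e3 ω = true})) ∪
          ((A ∩ {ω | η e1 ω = false}) ∩ ({ω | η e2 ω = false} ∩ {ω | η e3 ω = false})) := by
        ext ω
        simp only [Set.mem_inter_iff, Set.mem_union, Set.mem_setOf_eq]
        constructor
        · rintro ⟨hωA, hf⟩
          rw [hXvf ω] at hf
          cases hc : η e1 ω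
          · right; exact ⟨⟨hωA, rfl⟩, hf.1.trans hc, hf.2.trans hc⟩
          · left; exact ⟨⟨hωA, rfl⟩, hf.1.trans hc, hf.2.trans hc⟩
        · rintro (⟨⟨hωA, h1⟩, h2, h3⟩ | ⟨⟨hωA, h1⟩, h2, h3⟩) <;>
            exact ⟨hωA, (hXvf ω).mpr ⟨h2.trans h1.symm, h3.trans h1.symm⟩⟩
      have hmeas2 : ∀ c : Bool, MeasurableSet
          ((A ∩ {ω | η e1 ω = c}) ∩ ({ω | η e2 ω = c} ∩ {ω | η e3 ω = c})) := fun c =>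
        ((hAmeas.inter (hfib_meas e1 c)).inter ((hfib_meas e2 c).inter (hfib_meas e3 c)))
      have hsplitdisj : Disjoint
          ((A ∩ {ω | η e1 ω = true}) ∩ ({ω | η e2 ω = true} ∩ {ω | η e3 ω = true}))
          ((A ∩ {ω | η e1 ω = false}) ∩ ({ω | η e2 ω = false} ∩ {ω | η e3 ω = false})) := by
        rw [Set.disjoint_left]
        rintro ω ⟨⟨-, h1⟩, -⟩ ⟨⟨-, h1'⟩, -⟩
        rw [Set.mem_setOf_eq] at h1 h1'
        rw [h1] at h1'
        exact Bool.true_eq_false_eq_False h1'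
      have hPAsplit : P (A ∩ {ω | η e1 ω = true}) + P (A ∩ {ω | η e1 ω = false}) = P A := by
        have hu : (A ∩ {ω | η e1 ω = true}) ∪ (A ∩ {ω | η e1 ω = false}) = A := by
          ext ω
          simp only [Set.mem_union, Set.mem_inter_iff, Set.mem_setOf_eq]
          constructor
          · rintro (⟨h, -⟩ | ⟨h, -⟩) <;> exact h
          · intro h
            cases hc : η e1 ω
            · right; exact ⟨h, rfl⟩
            · left; exact ⟨h, rfl⟩
        have hd : Disjoint (A ∩ {ω | η e1 ω = true}) (A ∩ {ω | η e1 ω = false}) := by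
          rw [Set.disjoint_left]
          rintro ω ⟨-, h1⟩ ⟨-, h1'⟩
          rw [Set.mem_setOf_eq] at h1 h1'
          rw [h1] at h1'
          exact Bool.true_eq_false_eq_False h1'
        rw [← measure_union hd (hAmeas.inter (hfib_meas e1 false)), hu]
      have hPAfalse : P (A ∩ {ω | Xhat v ω = false}) = 1/4 * P A := by
        rw [hsplitF, measure_union hsplitdisj (hmeas2 false), hPAc true, hPAc false,
          ← add_mul, hPAsplit, mul_comm]
      have hPAtrue : P (A ∩ {ω | Xhat v ω = true}) = 3/4 * P A := by
        have hu : (A ∩ {ω | Xhat v ω = true}) ∪ (A ∩ {ω | Xhat v ω = false}) = A := by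
          ext ω
          simp only [Set.mem_union, Set.mem_inter_iff, Set.mem_setOf_eq]
          constructor
          · rintro (⟨h, -⟩ | ⟨h, -⟩) <;> exact h
          · intro h
            cases hc : Xhat v ω
            · right; exact ⟨h, rfl⟩
            · left; exact ⟨h, rfl⟩
        have hd : Disjoint (A ∩ {ω | Xhat v ω = true}) (A ∩ {ω | Xhat v ω = false}) := by
          rw [Set.disjoint_left]
          rintro ω ⟨-, h1⟩ ⟨-, h1'⟩
          rw [Set.mem_setOf_eq] at h1 h1'
          rw [h1] at h1'
          exact Bool.true_eq_false_eq_False h1'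
        have hsum : P (A ∩ {ω | Xhat v ω = true}) + P (A ∩ {ω | Xhat v ω = false}) = P A := by
          rw [← measure_union hd (hAmeas.inter (hXm v false)), hu]
        rw [hPAfalse] at hsum
        have hx : (1/4 : ℝ≥0∞) * P A ≠ ⊤ :=
          ENNReal.mul_ne_top (by norm_num) (measure_ne_top P A)
        have hsum2 : (1/4 : ℝ≥0∞) * P A + P (A ∩ {ω | Xhat v ω = true}) =
            (1/4 : ℝ≥0∞) * P A + 3/4 * P A := by
          rw [add_comm ((1/4 : ℝ≥0∞) * P A) ((3:ℝ≥0∞)/4 * P A), ← add_mul, harith3, one_mul,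
            add_comm]
          exact hsum
        exact (ENNReal.add_right_inj hx).mp hsum2
      -- conclude
      have hgoal_eq : {ω | ∀ u ∈ S, Xhat u ω = b u} = A ∩ {ω | Xhat v ω = b v} := by
        ext ω
        simp only [Set.mem_setOf_eq, Set.mem_inter_iff, hA]
        constructor
        · intro h
          exact ⟨fun u hu => h u (Finset.mem_of_mem_erase hu), h v hvS⟩
        · rintro ⟨h1, h2⟩ u hu
          by_cases huv : u = v
          · rw [huv]; exact h2
          · exact h1 u (Finset.mem_erase.mpr ⟨huv, hu⟩)
      rw [hgoal_eq, ← Finset.mul_prod_erase S _ hvS, ← hS', ← hPA]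
      cases hbv : b v
      · rw [if_neg (by simp)]
        exact hPAfalse
      · rw [if_pos rfl]
        exact hPAtrue
  -- single-vertex probabilities
  have single : ∀ u (c : Bool), P {ω | Xhat u ω = c} = if c then (3/4 : ℝ≥0∞) else 1/4 := by
    intro u c
    have h := master {u} (fun _ => c)
    simpa using h
  refine ⟨?_, ?_, ?_, ?_⟩
  -- Part 1
  · intro v ω
    cases hx : Xhat v ω
    · exact Bool.false_le _
    · obtain ⟨e, f, he, hf, hne⟩ := (hXhat v ω).mp hx
      have hYt : Y v ω = true := by
        rw [hY]
        cases hc : η e ω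
        · refine ⟨f, hf, ?_⟩
          cases hc' : η f ω
          · exact absurd (hc.trans hc'.symm) hne
          · rfl
        · exact ⟨e, he, hc⟩
      rw [hYt]
  -- Part 2
  · rw [iIndepFun_iff_measure_inter_preimage_eq_mul]
    intro s sets _hsets
    by_cases hempty : ∃ i ∈ s, sets i = ∅
    · obtain ⟨i, his, hi⟩ := hempty
      have hsub : ⋂ j ∈ s, Xhat j ⁻¹' sets j ⊆ (∅ : Set Ω) := by
        intro ω hω
        have hmem := Set.mem_iInter₂.mp hω i his
        rw [hi] at hmem
        exact hmem
      rw [measure_mono_null hsub measure_empty, Finset.prod_eq_zero his (by rw [hi]; simp)]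
    · push_neg at hempty
      have classify : ∀ A : Set Bool, A = ∅ ∨ A = {false} ∨ A = {true} ∨ A = Set.univ := by
        intro A
        by_cases ht : true ∈ A <;> by_cases hf : false ∈ A
        · right; right; right; ext x; cases x <;> simp [ht, hf]
        · right; right; left; ext x; cases x <;> simp [ht, hf]
        · right; left; ext x; cases x <;> simp [ht, hf]
        · left; ext x; cases x <;> simp [ht, hf]
      set b : V → Bool := fun u => if sets u = {true} then true else false with hb
      set s1 := s.filter (fun i => sets i ≠ Set.univ) with hs1
      have hsets1 : ∀ i ∈ s1, sets i = {b i} := by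
        intro i hi
        rw [hs1, Finset.mem_filter] at hi
        rcases classify (sets i) with h | h | h | h
        · exact absurd (hempty i hi.1) (by rw [h]; exact Set.not_nonempty_empty)
        · rw [hb]
          simp only
          rw [if_neg (by rw [h]; intro hh; simpa using congrArg (false ∈ ·) hh)]
          exact h
        · rw [hb]
          simp only
          rw [if_pos h]
          exact h
        · exact absurd h hi.2
      have hLHS : ⋂ i ∈ s, Xhat i ⁻¹' sets i = {ω | ∀ u ∈ s1, Xhat u ω = b u} := by
        ext ω
        simp only [Set.mem_iInter, Set.mem_preimage, Set.mem_setOf_eq]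
        constructor
        · intro h u hu
          have hmem := h u (Finset.mem_of_mem_filter u (hs1 ▸ hu))
          rw [hsets1 u hu] at hmem
          exact hmem
        · intro h i hi
          by_cases huniv : sets i = Set.univ
          · rw [huniv]; trivial
          · have hi1 : i ∈ s1 := by rw [hs1]; exact Finset.mem_filter.mpr ⟨hi, huniv⟩
            rw [hsets1 i hi1]
            exact h i hi1
      rw [hLHS, master s1 b, ← Finset.prod_filter_mul_prod_filter_not s
        (fun i => sets i ≠ Set.univ) (fun i => P (Xhat i ⁻¹' sets i))]
      have h2 : ∏ i ∈ s.filter (fun i => ¬ sets i ≠ Set.univ), P (Xhat i ⁻¹' sets i) = 1 := by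
        refine Finset.prod_eq_one fun i hi => ?_
        have huniv : sets i = Set.univ := not_not.mp (Finset.mem_filter.mp hi).2
        rw [huniv, Set.preimage_univ, measure_univ]
      rw [h2, mul_one]
      refine Finset.prod_congr (by rw [hs1]) fun i hi => ?_
      have hset : Xhat i ⁻¹' sets i = {ω | Xhat i ω = b i} := by
        rw [hsets1 i (hs1 ▸ hi)]
        ext ω
        simp
      rw [hset, single i (b i)]
  -- Part 3
  · intro v
    have h := single v true
    simpa using h
  -- Part 4
  · intro k l vs ws hinj
    have hvw : ∀ i j, vs i ≠ ws j := by
      intro i j h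
      have := hinj (a₁ := Sum.inl i) (a₂ := Sum.inr j) (by simpa using h)
      simp at this
    have hvsinj : Function.Injective vs := by
      intro i j h
      have := hinj (a₁ := Sum.inl i) (a₂ := Sum.inl j) (by simpa using h)
      simpa using this
    have hwsinj : Function.Injective ws := by
      intro i j h
      have := hinj (a₁ := Sum.inr i) (a₂ := Sum.inr j) (by simpa using h)
      simpa using this
    set b : V → Bool := fun u => if ∃ i, vs i = u then true else false with hb
    have hbT : ∀ i, b (vs i) = true := fun i => if_pos ⟨i, rfl⟩
    have hbF : ∀ j, b (ws j) = false := fun j => if_neg (by rintro ⟨i, hi⟩; exact hvw i j hi)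
    set sf : Finset V := (Finset.univ.image vs) ∪ (Finset.univ.image ws) with hsf
    have hevent : {ω | (∀ i, Xhat (vs i) ω = true) ∧ ∀ j, Xhat (ws j) ω = false}
        = {ω | ∀ u ∈ sf, Xhat u ω = b u} := by
      ext ω
      simp only [Set.mem_setOf_eq]
      constructor
      · rintro ⟨h1, h2⟩ u hu
        rw [hsf, Finset.mem_union] at hu
        rcases hu with hu | hu
        · obtain ⟨i, -, rfl⟩ := Finset.mem_image.mp hu
          rw [hbT i]; exact h1 i
        · obtain ⟨j, -, rfl⟩ := Finset.mem_image.mp hu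
          rw [hbF j]; exact h2 j
      · intro h
        constructor
        · intro i
          have hmem : vs i ∈ sf := by
            rw [hsf]
            exact Finset.mem_union_left _ (Finset.mem_image_of_mem vs (Finset.mem_univ i))
          have := h (vs i) hmem
          rwa [hbT i] at this
        · intro j
          have hmem : ws j ∈ sf := by
            rw [hsf]
            exact Finset.mem_union_right _ (Finset.mem_image_of_mem ws (Finset.mem_univ j))
          have := h (ws j) hmem
          rwa [hbF j] at this
    have hdisj : Disjoint (Finset.univ.image vs) (Finset.univ.image ws) := by
      rw [Finset.disjoint_left]
      rintro u hu1 hu2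
      obtain ⟨i, -, rfl⟩ := Finset.mem_image.mp hu1
      obtain ⟨j, -, hj⟩ := Finset.mem_image.mp hu2
      exact hvw i j hj.symm
    rw [hevent, master sf b, hsf, Finset.prod_union hdisj]
    congr 1
    · rw [Finset.prod_image (fun i _ j _ h => hvsinj h)]
      have hc : ∀ i ∈ (Finset.univ : Finset (Fin k)),
          (if b (vs i) = true then (3/4 : ℝ≥0∞) else 1/4) = 3/4 :=
        fun i _ => by rw [hbT i, if_pos rfl]
      rw [Finset.prod_congr rfl hc, Finset.prod_const, Finset.card_univ, Fintype.card_fin]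
    · rw [Finset.prod_image (fun i _ j _ h => hwsinj h)]
      have hc : ∀ j ∈ (Finset.univ : Finset (Fin l)),
          (if b (ws j) = true then (3/4 : ℝ≥0∞) else 1/4) = 1/4 :=
        fun j _ => by rw [hbF j, if_neg (by simp)]
      rw [Finset.prod_congr rfl hc, Finset.prod_const, Finset.card_univ, Fintype.card_fin]
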